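/- Let c⁰, c¹, c² : ℝ → ℝ be continuous functions and let A, B, W : ℝ → ℝ be differentiable functions satisfying A'(t) = -4 c⁰(t) A(t) B(t) - c¹(t), B'(t) = -4 c⁰(t) B(t)² - c²(t), and W'(t) = c⁰(t) (A(t)² - 2 B(t)) W(t). Then the function u(x,t) = W(t) · exp(-A(t) x - B(t) x²) satisfies the modified heat equation ∂ₜ u = c⁰(t) ∂ₓₓ u + c¹(t) x u + c²(t) x² u for all (x,t). -/

import Mathlib

open Real

private lemma exp_inner_hasDerivAt (a b y : ℝ) :
    HasDerivAt (fun y : ℝ => Real.exp (-a * y - b * y ^ 2))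
      (Real.exp (-a * y - b * y ^ 2) * (-a - 2 * b * y)) y := by
  have h1 : HasDerivAt (fun y : ℝ => -a * y - b * y ^ 2) (-a - 2 * b * y) y := by
    have : HasDerivAt (fun y : ℝ => -a * id y - b * y ^ 2) _ y :=
      ((hasDerivAt_id y).const_mul (-a)).sub ((hasDerivAt_pow 2 y).const_mul b)
    simpa [mul_comm, mul_assoc, mul_left_comm] using this
  simpa [mul_comm] using h1.exp

/-- Gaussian reduction for the modified heat equation. -/
theorem stmt_0 (c0 c1 c2 A B W : ℝ → ℝ)
    (hc0 : Continuous c0) (hc1 : Continuous c1) (hc2 : Continuous c2)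
    (hA : Differentiable ℝ A) (hB : Differentiable ℝ B) (hW : Differentiable ℝ W)
    (hA' : ∀ t, deriv A t = -4 * c0 t * A t * B t - c1 t)
    (hB' : ∀ t, deriv B t = -4 * c0 t * (B t) ^ 2 - c2 t)
    (hW' : ∀ t, deriv W t = c0 t * ((A t) ^ 2 - 2 * B t) * W t)
    (u : ℝ → ℝ → ℝ)
    (hu : ∀ x t, u x t = W t * Real.exp (-(A t) * x - B t * x ^ 2)) :
    ∀ x t, deriv (fun τ => u x τ) t =
      c0 t * deriv (deriv (fun y => u y t)) x + c1 t * x * u x t + c2 t * x ^ 2 * u x t := by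
  intro x t
  set E : ℝ → ℝ → ℝ := fun t y => Real.exp (-(A t) * y - B t * y ^ 2) with hE
  -- first spatial derivative
  have hdx : ∀ y, deriv (fun y => u y t) y = W t * E t y * (-(A t) - 2 * B t * y) := by
    intro y
    have h : HasDerivAt (fun y => u y t) (W t * (E t y * (-(A t) - 2 * B t * y))) y := by
      have := (exp_inner_hasDerivAt (A t) (B t) y).const_mul (W t)
      refine HasDerivAt.congr_of_eventuallyEq (by simpa [hE, mul_assoc] using this) ?_
      filter_upwards with z
      simpa [hE, neg_mul] using hu z t
    simpa [mul_assoc] using h.deriv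
  -- second spatial derivative
  have hdxx : deriv (deriv (fun y => u y t)) x
      = W t * E t x * ((-(A t) - 2 * B t * x) ^ 2 - 2 * B t) := by
    have h : HasDerivAt (fun y => W t * E t y * (-(A t) - 2 * B t * y))
        (W t * E t x * (-(A t) - 2 * B t * x) * (-(A t) - 2 * B t * x)
          + W t * E t x * (-(2 * B t))) x := by
      have h1 : HasDerivAt (fun y => W t * E t y)
          (W t * (E t x * (-(A t) - 2 * B t * x))) x :=
        (exp_inner_hasDerivAt (A t) (B t) x).const_mul (W t)
      have h2 : HasDerivAt (fun y : ℝ => -(A t) - 2 * B t * y) (-(2 * B t)) x := by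
        simpa using (((hasDerivAt_id x).const_mul (2 * B t)).const_sub (-(A t)))
      have : HasDerivAt (fun y => W t * E t y * (-(A t) - 2 * B t * y)) _ x := h1.mul h2
      convert this using 1
      ring
    have heq : deriv (fun y => u y t) = fun y => W t * E t y * (-(A t) - 2 * B t * y) :=
      funext hdx
    rw [heq, h.deriv]
    ring
  -- time derivative
  have hdt : deriv (fun τ => u x τ) t
      = deriv W t * E t x + W t * E t x * (-(deriv A t) * x - deriv B t * x ^ 2) := by
    have hinner : HasDerivAt (fun τ => -(A τ) * x - B τ * x ^ 2)
        (-(deriv A t) * x - deriv B t * x ^ 2) t := by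
      exact (((hA t).hasDerivAt.neg.mul_const x).sub ((hB t).hasDerivAt.mul_const (x ^ 2)))
    have hexp : HasDerivAt (fun τ => E τ x)
        (E t x * (-(deriv A t) * x - deriv B t * x ^ 2)) t := by
      simpa [hE, mul_comm] using hinner.exp
    have h : HasDerivAt (fun τ => u x τ)
        (deriv W t * E t x + W t * (E t x * (-(deriv A t) * x - deriv B t * x ^ 2))) t := by
      refine HasDerivAt.congr_of_eventuallyEq ((hW t).hasDerivAt.mul hexp) ?_
      filter_upwards with τ
      simpa [hE, neg_mul] using hu x τ
    simpa [mul_assoc] using h.deriv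
  rw [hdt, hdxx, hu x t, hW' t, hA' t, hB' t]
  ring
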